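/- For a non-degenerate simplex in Euclidean n-space with faces f_1, ..., f_{n+1}, where A_i is the (n-1)-dimensional area of face f_i and 𝐟_i its outward unit normal, the sum ∑_{i=1}^{n+1} A_i 𝐟_i = 0 (the Minkowski relation). -/

import Mathlib

open MeasureTheory RealInnerProductSpace

section MinkowskiAux

open Module Set

private lemma mink_haar_inst {m : ℕ} :
    (μH[(m:ℝ)] : Measure (EuclideanSpace ℝ (Fin m))).IsAddHaarMeasure := by
  have h : (m:ℝ) = ((finrank ℝ (EuclideanSpace ℝ (Fin m)) : ℕ) : ℝ) := by
    rw [finrank_euclideanSpace_fin]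
  rw [h]; infer_instance

private lemma mink_mu_transport {m N : ℕ} (W : Submodule ℝ (EuclideanSpace ℝ (Fin N)))
    (c : OrthonormalBasis (Fin m) ℝ W)
    (s : Set (EuclideanSpace ℝ (Fin N))) (hs : s ⊆ W) :
    μH[(m:ℝ)] s = μH[(m:ℝ)] ((fun x : EuclideanSpace ℝ (Fin m) => ((c.repr.symm x : W) : EuclideanSpace ℝ (Fin N))) ⁻¹' s) := by
  set φ : EuclideanSpace ℝ (Fin m) → EuclideanSpace ℝ (Fin N) := fun x => ((c.repr.symm x : W) : EuclideanSpace ℝ (Fin N)) with hφ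
  have hiso : Isometry φ := (W.subtypeₗᵢ.comp c.repr.symm.toLinearIsometry).isometry
  have himg : φ '' (φ ⁻¹' s) = s := by
    apply Set.image_preimage_eq_of_subset
    intro x hx
    exact ⟨c.repr ⟨x, hs hx⟩, by simp [hφ]⟩
  conv_lhs => rw [← himg]
  rw [hiso.hausdorffMeasure_image (Or.inl (by positivity))]

private lemma mink_mu_finite {m N : ℕ} (W : Submodule ℝ (EuclideanSpace ℝ (Fin N)))
    (hW : finrank ℝ W = m)
    (s : Set (EuclideanSpace ℝ (Fin N))) (hs : s ⊆ W) (hc : IsCompact s) :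
    μH[(m:ℝ)] s < ⊤ := by
  haveI := mink_haar_inst (m := m)
  obtain ⟨c⟩ : Nonempty (OrthonormalBasis (Fin m) ℝ W) :=
    ⟨(stdOrthonormalBasis ℝ W).reindex (finCongr hW)⟩
  rw [mink_mu_transport W c s hs]
  set φ : EuclideanSpace ℝ (Fin m) → EuclideanSpace ℝ (Fin N) := fun x => ((c.repr.symm x : W) : EuclideanSpace ℝ (Fin N)) with hφ
  have hiso : Isometry φ := (W.subtypeₗᵢ.comp c.repr.symm.toLinearIsometry).isometry
  have hcl : IsClosed (φ ⁻¹' s) := hc.isClosed.preimage hiso.continuous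
  have hbd : Bornology.IsBounded (φ ⁻¹' s) :=
    (hiso.antilipschitz.isBounded_preimage hc.isBounded)
  have : IsCompact (φ ⁻¹' s) := Metric.isCompact_of_isClosed_isBounded hcl hbd
  exact this.measure_lt_top

set_option maxHeartbeats 1000000 in
private lemma mink_det_block {m : ℕ} (W₁ W₂ : Submodule ℝ (EuclideanSpace ℝ (Fin (m+1))))
    (c₁ : OrthonormalBasis (Fin m) ℝ W₁) (c₂ : OrthonormalBasis (Fin m) ℝ W₂)
    (L : EuclideanSpace ℝ (Fin (m+1)) →ₗ[ℝ] EuclideanSpace ℝ (Fin (m+1)))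
    (hLW : ∀ x ∈ W₁, L x ∈ W₂)
    (u₁ u₂ : EuclideanSpace ℝ (Fin (m+1)))
    (hu₁ : u₁ ∈ W₁ᗮ) (hu₂ : u₂ ∈ W₂ᗮ) (hn₁ : ‖u₁‖ = 1) (hn₂ : ‖u₂‖ = 1) :
    |L.det| = |LinearMap.det ((c₂.repr.toLinearEquiv.toLinearMap.comp (L.restrict hLW)).comp
        c₁.repr.symm.toLinearEquiv.toLinearMap)| * |⟪u₂, L u₁⟫| := by
  classical
  have mkONB : ∀ (W : Submodule ℝ (EuclideanSpace ℝ (Fin (m+1))))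
      (c : OrthonormalBasis (Fin m) ℝ W) (u : EuclideanSpace ℝ (Fin (m+1)))
      (hu : u ∈ Wᗮ) (hn : ‖u‖ = 1),
      ∃ β : OrthonormalBasis (Fin m ⊕ Unit) ℝ (EuclideanSpace ℝ (Fin (m+1))),
        ⇑β = Sum.elim (fun k => ((c k : W) : EuclideanSpace ℝ (Fin (m+1)))) (fun _ => u) := by
    intro W c u hu hn
    set w : Fin m ⊕ Unit → EuclideanSpace ℝ (Fin (m+1)) :=
      Sum.elim (fun k => ((c k : W) : EuclideanSpace ℝ (Fin (m+1)))) (fun _ => u) with hw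
    have hon : Orthonormal ℝ w := by
      rw [orthonormal_iff_ite]
      rintro (i | i) (j | j)
      · have h2 := (orthonormal_iff_ite.mp c.orthonormal) i j
        simpa [hw, ← Submodule.coe_inner, Sum.inl.injEq] using h2
      · show (⟪w (Sum.inl i), w (Sum.inr j)⟫ : ℝ) = _
        rw [if_neg (by simp), hw]
        exact (Submodule.mem_orthogonal W u).mp hu _ (c i).2
      · show (⟪w (Sum.inr i), w (Sum.inl j)⟫ : ℝ) = _
        rw [if_neg (by simp), hw, real_inner_comm]
        exact (Submodule.mem_orthogonal W u).mp hu _ (c j).2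
      · show (⟪w (Sum.inr i), w (Sum.inr j)⟫ : ℝ) = _
        rw [if_pos rfl, hw]
        show (⟪u, u⟫ : ℝ) = 1
        rw [real_inner_self_eq_norm_mul_norm, hn]; norm_num
    have hcard : Fintype.card (Fin m ⊕ Unit) = finrank ℝ (EuclideanSpace ℝ (Fin (m+1))) := by
      simp [finrank_euclideanSpace_fin]
    let b : Basis (Fin m ⊕ Unit) ℝ (EuclideanSpace ℝ (Fin (m+1))) :=
      basisOfLinearIndependentOfCardEqFinrank hon.linearIndependent hcard
    have hb : ⇑b = w := coe_basisOfLinearIndependentOfCardEqFinrank _ _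
    refine ⟨b.toOrthonormalBasis (by rw [hb]; exact hon), ?_⟩
    rw [Basis.coe_toOrthonormalBasis, hb]
  obtain ⟨β₁, hβ₁⟩ := mkONB W₁ c₁ u₁ hu₁ hn₁
  obtain ⟨β₂, hβ₂⟩ := mkONB W₂ c₂ u₂ hu₂ hn₂
  have hdet1 : L.det = (LinearMap.toMatrix β₁.toBasis β₁.toBasis L).det :=
    (LinearMap.det_toMatrix _ L).symm
  have hcomp : LinearMap.toMatrix β₁.toBasis β₁.toBasis L
      = β₁.toBasis.toMatrix ⇑β₂.toBasis * LinearMap.toMatrix β₁.toBasis β₂.toBasis L := by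
    rw [← LinearMap.toMatrix_id_eq_basis_toMatrix, ← LinearMap.toMatrix_comp, LinearMap.id_comp]
  have hpm : |β₁.toBasis.det ⇑β₂.toBasis| = 1 := by
    have h : ⇑β₂.toBasis = ⇑β₂ := β₂.coe_toBasis
    rw [h]
    rcases β₁.det_to_matrix_orthonormalBasis_real β₂ with h' | h' <;> rw [h'] <;> norm_num
  set α : ℝ := ⟪u₂, L u₁⟫ with hα
  set A : Matrix (Fin m) (Fin m) ℝ :=
    Matrix.of fun r c => ⟪((c₂ r : W₂) : EuclideanSpace ℝ (Fin (m+1))), L ((c₁ c : W₁) : EuclideanSpace ℝ (Fin (m+1)))⟫ with hA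
  set B : Matrix (Fin m) Unit ℝ :=
    Matrix.of fun r _ => ⟪((c₂ r : W₂) : EuclideanSpace ℝ (Fin (m+1))), L u₁⟫ with hB
  have hrepr : ∀ x r', β₂.toBasis.repr x r' = ⟪β₂ r', x⟫ := by
    intro x r'
    rw [β₂.coe_toBasis_repr_apply, β₂.repr_apply_apply]
  have hb1 : ∀ c', β₁.toBasis c' = β₁ c' := fun c' => by rw [β₁.coe_toBasis]
  have hblock : LinearMap.toMatrix β₁.toBasis β₂.toBasis L
      = Matrix.fromBlocks A B 0 (Matrix.of fun _ _ => α) := by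
    ext r c
    rw [LinearMap.toMatrix_apply, hrepr, hb1]
    rcases r with r | r <;> rcases c with c | c
    · rw [hβ₁, hβ₂]; rfl
    · rw [hβ₁, hβ₂]; rfl
    · rw [hβ₁, hβ₂]
      show (⟪u₂, L ((c₁ c : W₁) : EuclideanSpace ℝ (Fin (m+1)))⟫ : ℝ) = 0
      rw [real_inner_comm]
      exact (Submodule.mem_orthogonal W₂ u₂).mp hu₂ _ (hLW _ (c₁ c).2)
    · rw [hβ₁, hβ₂]; rfl
  have hdetA : (LinearMap.det ((c₂.repr.toLinearEquiv.toLinearMap.comp (L.restrict hLW)).comp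
        c₁.repr.symm.toLinearEquiv.toLinearMap)) = A.det := by
    set F := ((c₂.repr.toLinearEquiv.toLinearMap.comp (L.restrict hLW)).comp
        c₁.repr.symm.toLinearEquiv.toLinearMap) with hF
    rw [(LinearMap.det_toMatrix (EuclideanSpace.basisFun (Fin m) ℝ).toBasis F).symm]
    congr 1
    ext r c
    rw [LinearMap.toMatrix_apply]
    have h1 : (EuclideanSpace.basisFun (Fin m) ℝ).toBasis c = EuclideanSpace.single c 1 := by
      rw [(EuclideanSpace.basisFun (Fin m) ℝ).coe_toBasis]
      simp [EuclideanSpace.basisFun_apply]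
    have h2 : ∀ x : EuclideanSpace ℝ (Fin m), (EuclideanSpace.basisFun (Fin m) ℝ).toBasis.repr x r = x r := by
      intro x
      rw [(EuclideanSpace.basisFun (Fin m) ℝ).coe_toBasis_repr_apply]
      simp [EuclideanSpace.basisFun_repr]
    rw [h1, h2]
    simp only [hF, LinearMap.comp_apply, LinearEquiv.coe_coe,
      LinearIsometryEquiv.coe_toLinearEquiv]
    rw [c₁.repr_symm_single]
    rw [c₂.repr_apply_apply]
    rw [Submodule.coe_inner]
    simp [LinearMap.restrict_apply, hA]
  rw [hdet1, hcomp, Matrix.det_mul, hblock, Matrix.det_fromBlocks_zero₂₁, abs_mul, abs_mul]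
  rw [← Basis.det_apply, hpm, one_mul, hdetA]
  congr 1
  simp [Matrix.det_unique]

private lemma mink_key_scaling {m : ℕ} (W₁ W₂ : Submodule ℝ (EuclideanSpace ℝ (Fin (m+1))))
    (h₁ : finrank ℝ W₁ = m) (h₂ : finrank ℝ W₂ = m)
    (L : EuclideanSpace ℝ (Fin (m+1)) →ₗ[ℝ] EuclideanSpace ℝ (Fin (m+1)))
    (hLW : ∀ x ∈ W₁, L x ∈ W₂)
    (u₁ u₂ : EuclideanSpace ℝ (Fin (m+1)))
    (hu₁ : u₁ ∈ W₁ᗮ) (hu₂ : u₂ ∈ W₂ᗮ) (hn₁ : ‖u₁‖ = 1) (hn₂ : ‖u₂‖ = 1)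
    (s : Set (EuclideanSpace ℝ (Fin (m+1)))) (hs : s ⊆ W₁) :
    μH[(m:ℝ)] (⇑L '' s) * ENNReal.ofReal |⟪u₂, L u₁⟫| = ENNReal.ofReal |L.det| * μH[(m:ℝ)] s := by
  classical
  haveI := mink_haar_inst (m := m)
  set c₁ := (stdOrthonormalBasis ℝ W₁).reindex (finCongr h₁) with hc₁
  set c₂ := (stdOrthonormalBasis ℝ W₂).reindex (finCongr h₂) with hc₂
  have hdb := mink_det_block W₁ W₂ c₁ c₂ L hLW u₁ u₂ hu₁ hu₂ hn₁ hn₂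
  set φ₁ : EuclideanSpace ℝ (Fin m) → EuclideanSpace ℝ (Fin (m+1)) :=
    fun x => ((c₁.repr.symm x : W₁) : EuclideanSpace ℝ (Fin (m+1))) with hφ₁
  set φ₂ : EuclideanSpace ℝ (Fin m) → EuclideanSpace ℝ (Fin (m+1)) :=
    fun x => ((c₂.repr.symm x : W₂) : EuclideanSpace ℝ (Fin (m+1))) with hφ₂
  set F := ((c₂.repr.toLinearEquiv.toLinearMap.comp (L.restrict hLW)).comp
        c₁.repr.symm.toLinearEquiv.toLinearMap) with hF
  set X : Set (EuclideanSpace ℝ (Fin m)) := φ₁ ⁻¹' s with hX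
  have hsX : φ₁ '' X = s := by
    apply Set.image_preimage_eq_of_subset
    intro x hx
    exact ⟨c₁.repr ⟨x, hs hx⟩, by simp [hφ₁]⟩
  have hcommute : ∀ x, φ₂ (F x) = L (φ₁ x) := by
    intro x
    simp only [hF, hφ₂, hφ₁, LinearMap.comp_apply, LinearEquiv.coe_coe,
      LinearIsometryEquiv.coe_toLinearEquiv, LinearIsometryEquiv.symm_apply_apply]
    rw [LinearMap.restrict_apply]
  have himg2 : φ₂ '' (⇑F '' X) = ⇑L '' s := by
    rw [← hsX, Set.image_image, Set.image_image]
    exact Set.image_congr fun x _ => hcommute x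
  have t1 : μH[(m:ℝ)] s = μH[(m:ℝ)] X := mink_mu_transport W₁ c₁ s hs
  have hiso₂ : Isometry φ₂ := (W₂.subtypeₗᵢ.comp c₂.repr.symm.toLinearIsometry).isometry
  have t2 : μH[(m:ℝ)] (⇑L '' s) = μH[(m:ℝ)] (⇑F '' X) := by
    rw [← himg2, hiso₂.hausdorffMeasure_image (Or.inl (by positivity))]
  have t3 : μH[(m:ℝ)] (⇑F '' X) = ENNReal.ofReal |F.det| * μH[(m:ℝ)] X :=
    Measure.addHaar_image_linearMap _ F X
  rw [t2, t3, t1, mul_comm (ENNReal.ofReal |F.det|) _, mul_assoc, ← ENNReal.ofReal_mul (abs_nonneg _)]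
  rw [mul_comm _ (ENNReal.ofReal _)]
  congr 1
  rw [hdb]

end MinkowskiAux


/-- The `(n-1)`-dimensional area of the `i`-th face of the simplex with vertices `v`
(the convex hull of all vertices except the `i`-th). -/
noncomputable def faceArea {n : ℕ} (v : Fin (n + 1) → EuclideanSpace ℝ (Fin n))
    (i : Fin (n + 1)) : ℝ :=
  (μH[((n : ℝ) - 1)] (convexHull ℝ (v '' {i}ᶜ))).toReal

/-- `u` is the outward unit normal to the `i`-th face of the simplex with vertices `v`:
it is a unit vector, orthogonal to the affine hull of the face, pointing away from the
omitted vertex `v i`. -/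
def IsOutwardNormal {n : ℕ} (v : Fin (n + 1) → EuclideanSpace ℝ (Fin n))
    (i : Fin (n + 1)) (u : EuclideanSpace ℝ (Fin n)) : Prop :=
  ‖u‖ = 1 ∧ (∀ j k, j ≠ i → k ≠ i → ⟪u, v j - v k⟫ = 0) ∧
    (∀ j, j ≠ i → ⟪u, v i - v j⟫ < 0)

section MainAux
open Module Set

set_option maxHeartbeats 2000000 in
private theorem minkowski_aux {m : ℕ} (v : Fin (m + 2) → EuclideanSpace ℝ (Fin (m + 1)))
    (hv : AffineIndependent ℝ v)
    (f : Fin (m + 2) → EuclideanSpace ℝ (Fin (m + 1)))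
    (hf : ∀ i, IsOutwardNormal v i (f i)) :
    ∑ i, faceArea v i • f i = 0 := by
  classical
  have htop : affineSpan ℝ (Set.range v) = ⊤ := by
    rw [hv.affineSpan_eq_top_iff_card_eq_finrank_add_one]
    simp [finrank_euclideanSpace_fin]
  let b : AffineBasis (Fin (m + 2)) ℝ (EuclideanSpace ℝ (Fin (m + 1))) := ⟨v, hv, htop⟩
  have hb : ⇑b = v := rfl
  -- gradients of barycentric coordinates
  set g : Fin (m + 2) → EuclideanSpace ℝ (Fin (m + 1)) := fun i =>
    (InnerProductSpace.toDual ℝ _).symm (LinearMap.toContinuousLinearMap (b.coord i).linear)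
    with hgdef
  have hg : ∀ i x, ⟪g i, x⟫ = (b.coord i).linear x := by
    intro i x
    rw [hgdef]
    rw [InnerProductSpace.toDual_symm_apply]
    rfl
  have hgd : ∀ i (x y : EuclideanSpace ℝ (Fin (m + 1))),
      ⟪g i, x - y⟫ = b.coord i x - b.coord i y := by
    intro i x y
    rw [hg]
    exact AffineMap.linearMap_vsub (b.coord i) x y
  have hgv : ∀ i j k, ⟪g i, v j - v k⟫
      = (if i = j then (1:ℝ) else 0) - (if i = k then 1 else 0) := by
    intro i j k
    rw [hgd, ← hb, b.coord_apply, b.coord_apply]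
  have hsumg : ∑ i, g i = 0 := by
    have h0 : ∀ x, ⟪∑ i, g i, x⟫ = (0:ℝ) := by
      intro x
      rw [sum_inner]
      have hterm : ∀ i ∈ Finset.univ, ⟪g i, x⟫ = b.coord i x - b.coord i 0 := by
        intro i _
        rw [← hgd i x 0, sub_zero]
      rw [Finset.sum_congr rfl hterm, Finset.sum_sub_distrib,
        b.sum_coord_apply_eq_one, b.sum_coord_apply_eq_one, sub_self]
    have := h0 (∑ i, g i)
    rwa [inner_self_eq_zero] at this
  -- the face directions
  set W : Fin (m + 2) → Submodule ℝ (EuclideanSpace ℝ (Fin (m + 1))) :=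
    fun i => vectorSpan ℝ (v '' {i}ᶜ) with hWdef
  have hWrank : ∀ i, finrank ℝ (W i) = m := by
    intro i
    have hvi : AffineIndependent ℝ (fun j : {j // j ∈ ({i}ᶜ : Set (Fin (m+2)))} => v j) :=
      hv.comp_embedding (Function.Embedding.subtype _)
    have hcard : Fintype.card {j // j ∈ ({i}ᶜ : Set (Fin (m+2)))} = m + 1 := by
      simp only [Set.mem_compl_iff, Set.mem_singleton_iff]
      rw [Fintype.card_subtype_compl, Fintype.card_subtype_eq, Fintype.card_fin]
      omega
    have h2 := hvi.finrank_vectorSpan hcard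
    have h3 : Set.range (fun j : {j // j ∈ ({i}ᶜ : Set (Fin (m+2)))} => v j) = v '' {i}ᶜ := by
      rw [← Set.image_eq_range]
    rw [h3] at h2
    exact h2
  have horth : ∀ i (u : EuclideanSpace ℝ (Fin (m+1))),
      (∀ j k, j ≠ i → k ≠ i → ⟪u, v j - v k⟫ = 0) → u ∈ (W i)ᗮ := by
    intro i u hu
    rw [Submodule.mem_orthogonal]
    intro x hx
    have hle : vectorSpan ℝ (v '' {i}ᶜ) ≤ LinearMap.ker ((innerSL ℝ u).toLinearMap) := by
      rw [vectorSpan_def, Submodule.span_le]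
      rintro - ⟨y, hy, z, hz, rfl⟩
      obtain ⟨jj, hjj, rfl⟩ := hy
      obtain ⟨kk, hkk, rfl⟩ := hz
      have := hu jj kk hjj hkk
      simpa using this
    have := hle hx
    simp only [LinearMap.mem_ker] at this
    rw [real_inner_comm]
    simpa using this
  have hgW : ∀ i, g i ∈ (W i)ᗮ := by
    intro i
    apply horth
    intro j k hj hk
    rw [hgv, if_neg (fun h => hj h.symm), if_neg (fun h => hk h.symm), sub_self]
  have hfW : ∀ i, f i ∈ (W i)ᗮ := fun i => horth i (f i) (hf i).2.1
  have hgvij : ∀ i j, j ≠ i → ⟪g i, v i - v j⟫ = 1 := by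
    intro i j hj
    rw [hgv, if_pos rfl, if_neg (fun h => hj h.symm), sub_zero]
  have hgne : ∀ i, g i ≠ 0 := by
    intro i h0
    obtain ⟨j, hj⟩ := exists_ne i
    have := hgvij i j hj
    rw [h0, inner_zero_left] at this
    norm_num at this
  have horank : ∀ i, finrank ℝ ((W i)ᗮ) = 1 := by
    intro i
    have h1 := Submodule.finrank_add_finrank_orthogonal (K := W i)
    rw [hWrank, finrank_euclideanSpace_fin] at h1
    omega
  have hspan : ∀ i, (ℝ ∙ g i) = (W i)ᗮ := by
    intro i
    apply Submodule.eq_of_le_of_finrank_le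
      ((Submodule.span_singleton_le_iff_mem _ _).mpr (hgW i))
    rw [horank, finrank_span_singleton (hgne i)]
  have hgnorm : ∀ i, ‖g i‖ ≠ 0 := fun i => norm_ne_zero_iff.mpr (hgne i)
  have hfg : ∀ i, f i = (-(‖g i‖⁻¹)) • g i := by
    intro i
    have hmem : f i ∈ (ℝ ∙ g i) := by rw [hspan]; exact hfW i
    obtain ⟨c, hc⟩ := Submodule.mem_span_singleton.mp hmem
    obtain ⟨j, hj⟩ := exists_ne i
    have hneg : ⟪f i, v i - v j⟫ < 0 := (hf i).2.2 j hj
    rw [← hc, real_inner_smul_left, hgvij i j hj, mul_one] at hneg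
    have hnorm : ‖f i‖ = 1 := (hf i).1
    rw [← hc, norm_smul] at hnorm
    have habs : |c| = ‖g i‖⁻¹ := by
      rw [Real.norm_eq_abs] at hnorm
      exact eq_inv_of_mul_eq_one_left hnorm
    rw [abs_of_neg hneg] at habs
    rw [← hc]
    congr 1
    linarith [habs]
  -- translation invariance of Hausdorff measure
  have htrans : ∀ (c : EuclideanSpace ℝ (Fin (m+1))) (s : Set (EuclideanSpace ℝ (Fin (m+1)))),
      μH[(m:ℝ)] ((fun x => x + c) '' s) = μH[(m:ℝ)] s := by
    intro c s
    have hiso : Isometry (fun x : EuclideanSpace ℝ (Fin (m+1)) => x + c) :=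
      Isometry.of_dist_eq (fun a b => by simp [dist_add_right])
    exact hiso.hausdorffMeasure_image (Or.inl (by positivity)) s
  set μface : Fin (m + 2) → ENNReal :=
    fun i => μH[(m:ℝ)] (convexHull ℝ (v '' {i}ᶜ)) with hμface
  have hfaceArea : ∀ i, faceArea v i = (μface i).toReal := by
    intro i
    have hc : ((m+1:ℕ):ℝ) - 1 = (m:ℝ) := by push_cast; ring
    rw [faceArea, hc]
  have hfacecompact : ∀ i, IsCompact (convexHull ℝ (v '' {i}ᶜ)) :=
    fun i => (Set.toFinite (v '' {i}ᶜ)).isCompact_convexHull ℝ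
  have hsub : ∀ i j, j ≠ i →
      (fun x => x + -(v j)) '' (convexHull ℝ (v '' {i}ᶜ)) ⊆ (W i : Set (EuclideanSpace ℝ (Fin (m+1)))) := by
    intro i j hj
    rintro - ⟨x, hx, rfl⟩
    have hx' : x ∈ affineSpan ℝ (v '' {i}ᶜ) := convexHull_subset_affineSpan _ hx
    have hv' : v j ∈ affineSpan ℝ (v '' {i}ᶜ) :=
      subset_affineSpan ℝ _ (Set.mem_image_of_mem v (by simp [hj]))
    have hmem := AffineSubspace.vsub_mem_direction hx' hv'
    rw [direction_affineSpan] at hmem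
    simpa [sub_eq_add_neg] using hmem
  have hfin : ∀ i, μface i < ⊤ := by
    intro i
    obtain ⟨j, hj⟩ := exists_ne i
    have := mink_mu_finite (W i) (hWrank i) ((fun x => x + -(v j)) '' (convexHull ℝ (v '' {i}ᶜ)))
      (hsub i j hj) ((hfacecompact i).image (continuous_id.add continuous_const))
    rwa [htrans] at this
  have hWo : ∀ i, (W i) = (ℝ ∙ g i)ᗮ := by
    intro i
    rw [hspan i, Submodule.orthogonal_orthogonal]
  -- the key ratio
  have hratio : ∀ i j, j ≠ i →
      μface j * ENNReal.ofReal (‖g i‖ / ‖g j‖) = μface i := by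
    intro i j hij
    set σ := Equiv.swap i j with hσ
    set d := b.basisOf i with hd
    set L : EuclideanSpace ℝ (Fin (m+1)) →ₗ[ℝ] EuclideanSpace ℝ (Fin (m+1)) :=
      d.constr ℝ (fun k : {k // k ≠ i} => v (σ k) - v j) with hL
    have hdk : ∀ k : {k // k ≠ i}, d k = v k - v i := by
      intro k
      rw [hd, b.basisOf_apply]
      rfl
    have hLd : ∀ k : {k // k ≠ i}, L (v k - v i) = v (σ k) - v j := by
      intro k
      rw [← hdk k, hL]
      exact d.constr_basis ℝ _ k
    have hσi : σ i = j := Equiv.swap_apply_left i j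
    have hσj : σ j = i := Equiv.swap_apply_right i j
    set T : EuclideanSpace ℝ (Fin (m+1)) →ᵃ[ℝ] EuclideanSpace ℝ (Fin (m+1)) :=
      AffineMap.mk' (fun x => L (x - v i) + v j) L (v i)
        (by intro p; simp [vsub_eq_sub, vadd_eq_add, sub_self, map_zero]) with hT
    have hTx : ∀ x, T x = L (x - v i) + v j := fun x => rfl
    have hTv : ∀ k, T (v k) = v (σ k) := by
      intro k
      by_cases hk : k = i
      · subst hk
        rw [hTx, sub_self, map_zero, zero_add, hσi]
      · rw [hTx, hLd ⟨k, hk⟩, sub_add_cancel]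
    -- determinant is ±1
    have hdet1 : |L.det| = 1 := by
      set S := convexHull ℝ (Set.range v) with hS
      have hTS : ⇑T '' S = S := by
        rw [hS, AffineMap.image_convexHull]
        congr 1
        have h2 : ⇑T ∘ v = v ∘ ⇑σ := funext hTv
        calc ⇑T '' Set.range v = Set.range (⇑T ∘ v) := (Set.range_comp _ _).symm
          _ = Set.range (v ∘ ⇑σ) := by rw [h2]
          _ = Set.range v := σ.surjective.range_comp v
      have hS0 : volume S ≠ 0 := by
        apply (Measure.measure_pos_of_nonempty_interior (μ := volume) _).ne'
        exact ⟨_, b.centroid_mem_interior_convexHull⟩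
      have hSfin : volume S ≠ ⊤ :=
        ((Set.toFinite _).isCompact_convexHull ℝ).measure_lt_top.ne
      have hvolT : volume (⇑T '' S) = ENNReal.ofReal |L.det| * volume S := by
        have hTdecomp : ⇑T '' S = (fun x => x + v j) '' (⇑L '' ((fun x => x + -(v i)) '' S)) := by
          rw [Set.image_image, Set.image_image]
          apply Set.image_congr
          intro x _
          rw [hTx, sub_eq_add_neg]
        rw [hTdecomp]
        have e1 : ∀ (c : EuclideanSpace ℝ (Fin (m+1))) (s : Set (EuclideanSpace ℝ (Fin (m+1)))),
            volume ((fun x => x + c) '' s) = volume s := by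
          intro c s
          rw [Set.image_add_right, measure_preimage_add_right]
        rw [e1, Measure.addHaar_image_linearMap, e1]
      rw [hTS] at hvolT
      have hone : ENNReal.ofReal |L.det| = 1 := by
        have h2 : volume S * ENNReal.ofReal |L.det| = volume S * 1 := by
          rw [mul_comm, ← hvolT, mul_one]
        exact ((ENNReal.mul_right_inj hS0 hSfin).mp h2)
      have := congrArg ENNReal.toReal hone
      rwa [ENNReal.toReal_ofReal (abs_nonneg _), ENNReal.toReal_one] at this
    -- the inner identity
    have hinner : ∀ x, ⟪g j, L x⟫ = ⟪g i, x⟫ := by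
      have heq : ((innerSL ℝ (g j)).toLinearMap).comp L = (innerSL ℝ (g i)).toLinearMap := by
        apply d.ext
        intro k
        simp only [LinearMap.comp_apply, ContinuousLinearMap.coe_coe, innerSL_apply_apply]
        rw [hdk k, hLd k, hgv j (σ k) j, hgv i k i]
        have h1 : ¬ (j = σ k) := by
          intro h
          exact k.2 (σ.injective (hσi.trans h)).symm
        have h2 : ¬ (i = (k : Fin (m+2))) := fun h => k.2 h.symm
        rw [if_neg h1, if_neg h2, if_pos rfl, if_pos rfl]
      intro x
      have := LinearMap.congr_fun heq x
      simpa using this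
    -- L maps W i to W j
    have hLW' : ∀ x ∈ W i, L x ∈ W j := by
      intro x hx
      have hgix : ⟪g i, x⟫ = 0 := by
        rw [hWo i] at hx
        exact (Submodule.mem_orthogonal _ x).mp hx _ (Submodule.mem_span_singleton_self _)
      rw [hWo j, Submodule.mem_orthogonal]
      rintro u hu'
      obtain ⟨a, rfl⟩ := Submodule.mem_span_singleton.mp hu'
      rw [real_inner_smul_left, hinner x, hgix, mul_zero]
    -- unit normals
    set u₁ : EuclideanSpace ℝ (Fin (m+1)) := ‖g i‖⁻¹ • g i with hu1d
    set u₂ : EuclideanSpace ℝ (Fin (m+1)) := ‖g j‖⁻¹ • g j with hu2d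
    have hu₁ : u₁ ∈ (W i)ᗮ := Submodule.smul_mem _ _ (hgW i)
    have hu₂ : u₂ ∈ (W j)ᗮ := Submodule.smul_mem _ _ (hgW j)
    have hn₁ : ‖u₁‖ = 1 := by
      rw [hu1d, norm_smul, norm_inv, norm_norm, inv_mul_cancel₀ (hgnorm i)]
    have hn₂ : ‖u₂‖ = 1 := by
      rw [hu2d, norm_smul, norm_inv, norm_norm, inv_mul_cancel₀ (hgnorm j)]
    have hαval : ⟪u₂, L u₁⟫ = ‖g i‖ / ‖g j‖ := by
      rw [hu2d, hu1d, real_inner_smul_left, L.map_smul, real_inner_smul_right, hinner (g i),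
        real_inner_self_eq_norm_mul_norm]
      field_simp
    -- the translated face
    set s : Set (EuclideanSpace ℝ (Fin (m+1))) :=
      (fun x => x + -(v j)) '' (convexHull ℝ (v '' {i}ᶜ)) with hsdef
    have hssub : s ⊆ (W i : Set (EuclideanSpace ℝ (Fin (m+1)))) := hsub i j hij
    have hLs : ⇑L '' s = (fun x => x + -(v i)) '' (convexHull ℝ (v '' ({j}ᶜ))) := by
      have hTface : ⇑T '' (convexHull ℝ (v '' {i}ᶜ)) = convexHull ℝ (v '' {j}ᶜ) := by
        rw [AffineMap.image_convexHull]
        congr 1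
        have hσim : ⇑σ '' ({i}ᶜ : Set (Fin (m+2))) = ({j}ᶜ : Set (Fin (m+2))) := by
          rw [Set.image_compl_eq σ.bijective, Set.image_singleton, hσi]
        calc ⇑T '' (v '' {i}ᶜ) = (fun x => T (v x)) '' ({i}ᶜ : Set (Fin (m+2))) := by
              rw [Set.image_image]
          _ = (fun x => v (σ x)) '' ({i}ᶜ : Set (Fin (m+2))) := by
              apply Set.image_congr
              intro x _
              exact hTv x
          _ = v '' (⇑σ '' ({i}ᶜ : Set (Fin (m+2)))) := by rw [Set.image_image]
          _ = v '' {j}ᶜ := by rw [hσim]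
      calc ⇑L '' s = (fun x => T x + -(v i)) '' (convexHull ℝ (v '' {i}ᶜ)) := by
            rw [hsdef, Set.image_image]
            apply Set.image_congr
            intro x _
            have h1 : L (x + -(v j)) = L (x - v i) - L (v j - v i) := by
              rw [← map_sub]; congr 1; abel
            have h2 : L (v j - v i) = v i - v j := by
              rw [hLd ⟨j, hij⟩]
              simp only [hσj]
            rw [h1, h2, hTx]
            abel
        _ = (fun x => x + -(v i)) '' (⇑T '' (convexHull ℝ (v '' {i}ᶜ))) := by
            rw [Set.image_image]
        _ = _ := by rw [hTface]
    have hks := mink_key_scaling (W i) (W j) (hWrank i) (hWrank j) L hLW' u₁ u₂ hu₁ hu₂ hn₁ hn₂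
      s hssub
    rw [hLs, hsdef, htrans, htrans, hαval, hdet1,
      abs_of_nonneg (by positivity : (0:ℝ) ≤ ‖g i‖ / ‖g j‖)] at hks
    simpa using hks
  -- assemble
  have hAc : ∀ i, faceArea v i * ‖g i‖⁻¹ = faceArea v 0 * ‖g 0‖⁻¹ := by
    intro i
    by_cases h0 : i = 0
    · rw [h0]
    · have hr := hratio 0 i h0
      have htr := congrArg ENNReal.toReal hr
      rw [ENNReal.toReal_mul, ENNReal.toReal_ofReal (by positivity)] at htr
      rw [hfaceArea i, hfaceArea 0]
      have hgi := hgnorm i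
      have hg0 := hgnorm (0 : Fin (m+2))
      field_simp at htr ⊢
      linarith [htr]
  have hstep : ∀ i, faceArea v i • f i = (-(faceArea v 0 * ‖g 0‖⁻¹)) • g i := by
    intro i
    rw [hfg i, smul_smul, ← hAc i]
    congr 1
    ring
  calc ∑ i, faceArea v i • f i = ∑ i, (-(faceArea v 0 * ‖g 0‖⁻¹)) • g i :=
        Finset.sum_congr rfl (fun i _ => hstep i)
    _ = (-(faceArea v 0 * ‖g 0‖⁻¹)) • ∑ i, g i := by rw [Finset.smul_sum]
    _ = 0 := by rw [hsumg, smul_zero]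

end MainAux

/-- The Minkowski relation: the area-weighted sum of the outward unit normals of a
non-degenerate simplex vanishes. -/
theorem minkowski_relation {n : ℕ} (v : Fin (n + 1) → EuclideanSpace ℝ (Fin n))
    (hv : AffineIndependent ℝ v)
    (f : Fin (n + 1) → EuclideanSpace ℝ (Fin n))
    (hf : ∀ i, IsOutwardNormal v i (f i)) :
    ∑ i, faceArea v i • f i = 0 := by
  match n with
  | 0 =>
    exfalso
    have h := (hf 0).1
    have hz : f 0 = 0 := Subsingleton.elim _ _
    rw [hz, norm_zero] at h
    norm_num at h
  | (m + 1) =>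
    exact minkowski_aux v hv f hf
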